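/- For r ∈ (0,1), the identity 1 − (4/5 · (1 − (1−r²)^(5/4))/(1 − (1−r²)))² = (16/25) Σ_{n=1}^{∞} [(2(−5/4)_{n+2} − (−5/2)_{n+2})/(n+2)!] r^{2n} holds, where (a)_n denotes the Pochhammer symbol. -/

import Mathlib

set_option maxHeartbeats 1000000

/-- Rising factorial (Pochhammer symbol) of a real number. -/
noncomputable def poch (a : ℝ) (n : ℕ) : ℝ := ∏ i ∈ Finset.range n, (a + i)

lemma poch_zero (a : ℝ) : poch a 0 = 1 := by simp [poch]

lemma poch_succ (a : ℝ) (n : ℕ) : poch a (n + 1) = poch a n * (a + n) := by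
  simp [poch, Finset.prod_range_succ]

lemma poch_one (a : ℝ) : poch a 1 = a := by
  rw [show (1:ℕ) = 0 + 1 from rfl, poch_succ, poch_zero]; push_cast; ring

lemma poch_two (a : ℝ) : poch a 2 = a * (a + 1) := by
  rw [show (2:ℕ) = 0 + 1 + 1 from rfl, poch_succ, poch_succ, poch_zero]; push_cast; ring

-- summability of the derivative bound
lemma summable_bound (b : ℝ) {ρ : ℝ} (h0 : 0 < ρ) (h1 : ρ < 1) :
    Summable (fun n : ℕ => |poch b n| / n.factorial * (n * ρ ^ (n - 1))) := by
  set r := (1 + ρ) / 2 with hrdef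
  have hρr : ρ < r := by rw [hrdef]; linarith
  have hr1 : r < 1 := by rw [hrdef]; linarith
  apply summable_of_ratio_norm_eventually_le hr1
  obtain ⟨N, hN⟩ := exists_nat_ge (|b| * ρ / (r - ρ))
  filter_upwards [Filter.eventually_ge_atTop (N + 1)] with n hn
  have hn1 : 1 ≤ n := le_trans (Nat.le_add_left 1 N) hn
  have hnN : (N : ℝ) ≤ n := by exact_mod_cast le_trans (Nat.le_add_right N 1) hn
  have hfact : ((n + 1).factorial : ℝ) = (n + 1) * n.factorial := by
    push_cast [Nat.factorial_succ]; ring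
  have hfn : (0:ℝ) < n.factorial := by positivity
  have hρn : (0:ℝ) < ρ ^ (n - 1) := by positivity
  have key : |b + n| * ρ ≤ r * n := by
    have h2 : |b + n| ≤ |b| + n := by
      calc |b + n| ≤ |b| + |(n:ℝ)| := abs_add_le _ _
      _ = |b| + n := by rw [Nat.abs_cast]
    have h3 : |b| * ρ ≤ (r - ρ) * n := by
      rcases le_or_gt (r - ρ) 0 with h | h
      · nlinarith
      · have := (div_le_iff₀ h).mp (le_trans hN hnN)
        nlinarith
    nlinarith
  have habs : ∀ m : ℕ, ‖|poch b m| / m.factorial * (m * ρ ^ (m - 1))‖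
      = |poch b m| / m.factorial * (m * ρ ^ (m - 1)) := by
    intro m; rw [Real.norm_of_nonneg]; positivity
  rw [habs, habs]
  have hsucc : n - 1 + 1 = n := Nat.succ_pred_eq_of_pos hn1
  have hpow : ρ ^ n = ρ ^ (n-1) * ρ := by rw [← pow_succ, hsucc]
  have hPsucc : |poch b (n+1)| = |poch b n| * |b + n| := by
    rw [poch_succ, abs_mul]
  rw [hPsucc, hfact]
  push_cast
  have hsimp : |poch b n| * |b + n| / ((n + 1 : ℝ) * n.factorial) * ((n+1 : ℝ) * ρ ^ n)
      = |poch b n| / n.factorial * ρ ^ (n-1) * (|b + n| * ρ) := by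
    rw [hpow]
    field_simp
  rw [hsimp]
  have hnn : (0:ℝ) ≤ |poch b n| / n.factorial * ρ ^ (n - 1) := by positivity
  calc |poch b n| / n.factorial * ρ ^ (n-1) * (|b + n| * ρ)
      ≤ |poch b n| / n.factorial * ρ ^ (n-1) * (r * n) := by
        exact mul_le_mul_of_nonneg_left key hnn
    _ = r * (|poch b n| / n.factorial * (n * ρ ^ (n-1))) := by ring

lemma hasSum_binomial (a : ℝ) {x : ℝ} (hx0 : 0 ≤ x) (hx1 : x < 1) :
    HasSum (fun n : ℕ => poch (-a) n / n.factorial * x ^ n) ((1 - x) ^ a) := by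
  set b : ℝ := -a with hb
  set ρ : ℝ := (1 + x) / 2 with hρ
  have hρ0 : 0 < ρ := by rw [hρ]; linarith
  have hρ1 : ρ < 1 := by rw [hρ]; linarith
  have hxρ : x < ρ := by rw [hρ]; linarith
  set t : Set ℝ := Set.Ioo (-ρ) ρ with ht_def
  have ht : IsOpen t := isOpen_Ioo
  have h't : IsPreconnected t := (convex_Ioo _ _).isPreconnected
  set g : ℕ → ℝ → ℝ := fun n y => poch b n / n.factorial * y ^ n with hg_def
  set g' : ℕ → ℝ → ℝ := fun n y => poch b n / n.factorial * (n * y ^ (n - 1)) with hg'_def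
  set u : ℕ → ℝ := fun n => |poch b n| / n.factorial * (n * ρ ^ (n - 1)) with hu_def
  have hu : Summable u := summable_bound b hρ0 hρ1
  have hg : ∀ (n : ℕ) (y : ℝ), y ∈ t → HasDerivAt (g n) (g' n y) y := by
    intro n y _
    exact (hasDerivAt_pow n y).const_mul _
  have hg' : ∀ (n : ℕ) (y : ℝ), y ∈ t → ‖g' n y‖ ≤ u n := by
    intro n y hy
    have hyρ : |y| ≤ ρ := by
      rw [abs_le]; exact ⟨le_of_lt hy.1, le_of_lt hy.2⟩
    have : ‖g' n y‖ = |poch b n| / n.factorial * (n * |y| ^ (n - 1)) := by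
      simp [hg'_def, abs_mul, abs_div, abs_pow, Nat.abs_cast]
    rw [this]
    have hpow : |y| ^ (n - 1) ≤ ρ ^ (n - 1) := pow_le_pow_left₀ (abs_nonneg y) hyρ _
    have h1 : (0:ℝ) ≤ |poch b n| / n.factorial := by positivity
    have h2 : (0:ℝ) ≤ (n:ℝ) := by positivity
    exact mul_le_mul_of_nonneg_left (mul_le_mul_of_nonneg_left hpow h2) h1
  have h0t : (0:ℝ) ∈ t := ⟨by linarith, hρ0⟩
  have hxt : x ∈ t := ⟨by linarith, hxρ⟩
  have hg00 : ∀ n : ℕ, n ≠ 0 → g n 0 = 0 := by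
    intro n hn; simp [hg_def, zero_pow hn]
  have hg0 : Summable fun n => g n 0 := by
    apply summable_of_ne_finset_zero (s := {0})
    intro n hn
    exact hg00 n (by simpa using hn)
  -- the sum function and its derivative
  have hF : ∀ y ∈ t, HasDerivAt (fun z => ∑' n, g n z) (∑' n, g' n y) y :=
    fun y hy => hasDerivAt_tsum_of_isPreconnected hu ht h't hg hg' h0t hg0 hy
  set F : ℝ → ℝ := fun z => ∑' n, g n z with hF_def
  -- the ODE: (1 - y) * F' y = b * F y on t
  have key : ∀ y ∈ t, (1 - y) * (∑' n, g' n y) = b * F y := by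
    intro y hy
    have hsum' : Summable fun n => g' n y :=
      Summable.of_norm_bounded hu (fun n => hg' n y hy)
    have hsumg : Summable fun n => g n y :=
      summable_of_summable_hasDerivAt_of_isPreconnected hu ht h't hg hg' h0t hg0 hy
    set A : ℕ → ℝ := fun n => g' (n + 1) y with hA_def
    set B : ℕ → ℝ := fun n => y * g' n y with hB_def
    have hsumA : Summable A := (summable_nat_add_iff 1).2 hsum'
    have hsumB : Summable B := hsum'.mul_left y
    have h1 : ∑' n, g' n y = ∑' n, A n := by
      have h0' : g' 0 y = 0 := by simp [hg'_def]
      rw [hsum'.tsum_eq_zero_add, h0', zero_add]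
    have hBA : ∀ n : ℕ, B (n + 1) = y * A n := fun n => rfl
    have h2 : ∑' n, B n = y * ∑' n, A n := by
      rw [hsumB.tsum_eq_zero_add]
      have : B 0 = 0 := by simp [hB_def, hg'_def]
      rw [this, zero_add]
      rw [← tsum_mul_left]
    have hcoef : ∀ n : ℕ, A n - B n = b * g n y := by
      intro n
      have hfact : ((n + 1).factorial : ℝ) = (n + 1) * n.factorial := by
        push_cast [Nat.factorial_succ]; ring
      have hfn : ((n.factorial : ℝ)) ≠ 0 := by positivity
      cases n with
      | zero => simp [hA_def, hB_def, hg'_def, hg_def, poch_succ, poch_zero]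
      | succ m =>
        simp only [hA_def, hB_def, hg'_def, hg_def]
        rw [poch_succ]
        have hfact2 : ((m + 1 + 1).factorial : ℝ) = (m + 1 + 1) * (m + 1).factorial := by
          push_cast [Nat.factorial_succ]; ring
        rw [hfact2]
        have hfm : (((m+1).factorial : ℝ)) ≠ 0 := by positivity
        have e1 : m + 1 + 1 - 1 = m + 1 := rfl
        have e2 : m + 1 - 1 = m := rfl
        rw [e1, e2]
        have : y ^ (m + 1) = y ^ m * y := pow_succ y m
        rw [this]
        field_simp
        push_cast
        ring
    calc (1 - y) * (∑' n, g' n y) = ∑' n, g' n y - y * ∑' n, g' n y := by ring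
      _ = ∑' n, A n - ∑' n, B n := by rw [h1, h2]
      _ = ∑' n, (A n - B n) := (Summable.tsum_sub hsumA hsumB).symm
      _ = ∑' n, b * g n y := tsum_congr hcoef
      _ = b * F y := by rw [tsum_mul_left]
  -- G = F * (1-y)^b has derivative 0 on t
  set G : ℝ → ℝ := fun y => F y * (1 - y) ^ b with hG_def
  have hG : ∀ y ∈ t, HasDerivAt G 0 y := by
    intro y hy
    have h1y : (0:ℝ) < 1 - y := by have := hy.2; simp at this ⊢; linarith
    have hrpow : HasDerivAt (fun z => (1 - z) ^ b) (b * (1 - y) ^ (b - 1) * (-1)) y := by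
      have h := ((hasDerivAt_id y).const_sub 1).rpow_const (p := b) (Or.inl (ne_of_gt h1y))
      simpa using h
    have hprod := (hF y hy).mul hrpow
    have hval : (∑' n, g' n y) * (1 - y) ^ b + F y * (b * (1 - y) ^ (b - 1) * (-1)) = 0 := by
      have hsplit : (1 - y) ^ b = (1 - y) ^ (b - 1) * (1 - y) := by
        calc (1 - y) ^ b = (1 - y) ^ (b - 1 + 1) := by norm_num
          _ = (1 - y) ^ (b - 1) * (1 - y) ^ (1:ℝ) := Real.rpow_add h1y _ _
          _ = (1 - y) ^ (b - 1) * (1 - y) := by rw [Real.rpow_one]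
      rw [hsplit]
      linear_combination (1 - y) ^ (b - 1) * (key y hy)
    rw [← hval]
    exact hprod
  -- G is constant on [0, x]
  have hsub : Set.Icc (0:ℝ) x ⊆ t := by
    intro y hy
    exact ⟨by have := hy.1; linarith, by have := hy.2; linarith⟩
  have hGconst : G x = G 0 := by
    have hcont : ContinuousOn G (Set.Icc 0 x) :=
      fun y hy => ((hG y (hsub hy)).continuousAt).continuousWithinAt
    have hderiv : ∀ y ∈ Set.Ico (0:ℝ) x, HasDerivWithinAt G 0 (Set.Ici y) y :=
      fun y hy => (hG y (hsub ⟨hy.1, le_of_lt hy.2⟩)).hasDerivWithinAt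
    exact constant_of_has_deriv_right_zero hcont hderiv x ⟨hx0, le_refl x⟩
  have hF0 : F 0 = 1 := by
    have hF00 : F 0 = ∑' n, g n 0 := rfl
    rw [hF00, tsum_eq_single 0 (fun n hn => hg00 n hn)]
    simp [hg_def, poch_zero]
  have hG0 : G 0 = 1 := by
    simp [hG_def, hF0, Real.one_rpow]
  have h1x : (0:ℝ) < 1 - x := by linarith
  have hFx : F x = (1 - x) ^ a := by
    have h := hGconst.trans hG0
    rw [hG_def] at h
    have hne : (1 - x) ^ b ≠ 0 := ne_of_gt (Real.rpow_pos_of_pos h1x b)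
    have hFxv : F x = 1 / (1 - x) ^ b := eq_div_of_mul_eq hne h
    rw [hFxv, one_div, ← Real.rpow_neg (le_of_lt h1x), hb, neg_neg]
  have hsumx : Summable fun n => g n x :=
    summable_of_summable_hasDerivAt_of_isPreconnected hu ht h't hg hg' h0t hg0 hxt
  have := hsumx.hasSum
  rw [show (∑' n, g n x) = F x from rfl, hFx] at this
  exact this

theorem one_sub_stolarsky_series (r : ℝ) (hr : r ∈ Set.Ioo (0:ℝ) 1) :
    1 - (4 / 5 * (1 - (1 - r ^ 2) ^ ((5:ℝ) / 4)) / (1 - (1 - r ^ 2))) ^ 2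
      = 16 / 25 *
        ∑' n : ℕ,
          ((2 * poch (-5 / 4) (n + 1 + 2) - poch (-5 / 2) (n + 1 + 2)) /
              ((n + 1 + 2).factorial : ℝ)) * r ^ (2 * (n + 1)) := by
  obtain ⟨hr0, hr1⟩ := hr
  set x : ℝ := r ^ 2 with hx_def
  have hx0 : 0 < x := by positivity
  have hx1 : x < 1 := by
    have : r * r < 1 * 1 := by
      apply mul_lt_mul' (le_of_lt hr1) hr1 (le_of_lt hr0) one_pos
    simpa [hx_def, pow_two] using this
  set A : ℝ := (1 - x) ^ ((5:ℝ)/4) with hA_def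
  set B : ℝ := (1 - x) ^ ((5:ℝ)/2) with hB_def
  have h1x : (0:ℝ) < 1 - x := by linarith
  have hA : HasSum (fun n : ℕ => poch (-5/4) n / n.factorial * x ^ n) A := by
    have := hasSum_binomial (5/4) (le_of_lt hx0) hx1
    norm_num at this ⊢
    exact this
  have hB : HasSum (fun n : ℕ => poch (-5/2) n / n.factorial * x ^ n) B := by
    have := hasSum_binomial (5/2) (le_of_lt hx0) hx1
    norm_num at this ⊢
    exact this
  set c : ℕ → ℝ := fun n => (2 * poch (-5/4) n - poch (-5/2) n) / n.factorial with hc_def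
  have hC : HasSum (fun n => c n * x ^ n) (2 * A - B) := by
    have h := (hA.mul_left 2).sub hB
    have hfun : (fun n => 2 * (poch (-5/4) n / n.factorial * x ^ n)
        - poch (-5/2) n / n.factorial * x ^ n) = fun n => c n * x ^ n := by
      funext n
      simp only [hc_def]
      ring
    rwa [hfun] at h
  -- shift by 3
  have h3 : HasSum (fun n => c (n + 3) * x ^ (n + 3))
      ((2 * A - B) - ∑ i ∈ Finset.range 3, c i * x ^ i) :=
    (hasSum_nat_add_iff' 3).2 hC
  -- compute the first three coefficients
  have hc0 : c 0 = 1 := by norm_num [hc_def, poch_zero]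
  have hc1 : c 1 = 0 := by norm_num [hc_def, poch_one]
  have hc2 : c 2 = -25/16 := by norm_num [hc_def, poch_two, Nat.factorial]
  have hsum3 : ∑ i ∈ Finset.range 3, c i * x ^ i = 1 - 25/16 * x ^ 2 := by
    rw [Finset.sum_range_succ, Finset.sum_range_succ, Finset.sum_range_one, hc0, hc1, hc2]
    ring
  rw [hsum3] at h3
  -- divide by x^2
  have h4 : HasSum (fun n => c (n + 3) * x ^ (n + 3) / x ^ 2)
      ((2 * A - B - (1 - 25/16 * x ^ 2)) / x ^ 2) := h3.div_const _
  have hx2ne : x ^ 2 ≠ 0 := by positivity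
  have hfun2 : (fun n : ℕ => c (n + 3) * x ^ (n + 3) / x ^ 2)
      = fun n : ℕ => ((2 * poch (-5 / 4) (n + 1 + 2) - poch (-5 / 2) (n + 1 + 2)) /
              ((n + 1 + 2).factorial : ℝ)) * r ^ (2 * (n + 1)) := by
    funext n
    have e1 : n + 1 + 2 = n + 3 := by ring
    have e2 : r ^ (2 * (n + 1)) = x ^ (n + 1) := by
      rw [hx_def, ← pow_mul]
    rw [e1, e2]
    have e3 : x ^ (n + 3) = x ^ (n + 1) * x ^ 2 := by ring
    rw [e3]
    simp only [hc_def]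
    field_simp [hc_def]
  rw [hfun2] at h4
  rw [h4.tsum_eq]
  -- final algebraic identity
  have hAB : A ^ 2 = B := by
    rw [hA_def, hB_def]
    rw [← Real.rpow_natCast ((1 - x) ^ ((5:ℝ)/4)) 2, ← Real.rpow_mul (le_of_lt h1x)]
    norm_num
  have hden : 1 - (1 - r ^ 2) = x := by rw [hx_def]; ring
  rw [hden, ← hAB]
  have hxne : x ≠ 0 := ne_of_gt hx0
  field_simp
  ring
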